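/- Weighted Poincaré inequality for multi-species velocity fluctuations (Lemma 3.2 of [HT2021], as used in Appendix B): if λ ≥ 0 is a spectral-gap lower bound for (k, M), then ∑_{α,β∈I} k_{αβ} ∬ |u_α(x) − u_β(y)|² dμ_α(x) dμ_β(y) ≥ (ζλ/M) ∑_{α,β∈I} ∬ |u_α(x) − u_β(y)|² dμ_α(x) dμ_β(y), where the sums run over all ordered pairs (α,β), including α = β. -/

import Mathlib

open MeasureTheory Finset
open scoped RealInnerProductSpace

private lemma stmt5_alg (A B p qa qb x y : ℝ) (hA : A ≠ 0) (hB : B ≠ 0) :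
    B * x + A * y - 2 * p
      = B * (x - qa / A) + A * (y - qb / B)
        + A * B * (qa / A ^ 2 - 2 * p / (A * B) + qb / B ^ 2) := by
  field_simp
  ring

/-- Weighted Poincaré inequality for multi-species velocity fluctuations
(Lemma 3.2 of [HT2021], as used in Appendix B). -/
theorem stmt_5 {I : Type*} [Fintype I] [DecidableEq I] [Nonempty I]
    (hcard : 1 < Fintype.card I)
    (M : I → ℝ) (hM : ∀ α, 0 < M α)
    (k : I → I → ℝ) (hk_nonneg : ∀ α β, 0 ≤ k α β) (hk_symm : ∀ α β, k α β = k β α)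
    (lam : ℝ) (hlam : 0 ≤ lam)
    (hgap : ∀ y : I → ℝ,
      lam * ∑ α, ∑ β ∈ univ.filter (fun β => β ≠ α), (y α - y β) ^ 2 * M α * M β
        ≤ (∑ α, M α) *
            ∑ α, ∑ β ∈ univ.filter (fun β => β ≠ α), k α β * (y α - y β) ^ 2 * M α * M β)
    (ζ : ℝ) (hζ : ζ = 1 - (univ.sup' univ_nonempty M) / (∑ α, M α))
    {d : ℕ} (hd : 1 ≤ d)
    (μ : I → Measure (EuclideanSpace ℝ (Fin d)))
    [∀ α, IsFiniteMeasure (μ α)]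
    (hμ : ∀ α, ((μ α) Set.univ).toReal = M α)
    (u : I → EuclideanSpace ℝ (Fin d) → EuclideanSpace ℝ (Fin d))
    (hu_meas : ∀ α, Measurable (u α))
    (hu_int : ∀ α, Integrable (fun x => ‖u α x‖ ^ 2) (μ α)) :
    (ζ * lam / (∑ α, M α)) *
        ∑ α, ∑ β, ∫ x, ∫ y, ‖u α x - u β y‖ ^ 2 ∂(μ β) ∂(μ α)
      ≤ ∑ α, ∑ β, k α β * ∫ x, ∫ y, ‖u α x - u β y‖ ^ 2 ∂(μ β) ∂(μ α) := by
  classical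
  set SM : ℝ := ∑ α, M α with hSMdef
  have hSMpos : 0 < SM := Finset.sum_pos (fun α _ => hM α) univ_nonempty
  have hM0 : ∀ α, (M α : ℝ) ≠ 0 := fun α => (hM α).ne'
  -- integrability facts
  have hmem : ∀ α, MemLp (u α) 2 (μ α) := fun α =>
    (memLp_two_iff_integrable_sq_norm (hu_meas α).aestronglyMeasurable).mpr (hu_int α)
  have hint : ∀ α, Integrable (u α) (μ α) := fun α => (hmem α).integrable one_le_two
  set a : I → ℝ := fun α => ∫ x, ‖u α x‖ ^ 2 ∂(μ α) with hadef
  set b : I → EuclideanSpace ℝ (Fin d) := fun α => ∫ x, u α x ∂(μ α) with hbdef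
  -- key computation of the double integral
  have key : ∀ α β, (∫ x, ∫ y, ‖u α x - u β y‖ ^ 2 ∂(μ β) ∂(μ α))
      = M β * a α + M α * a β - 2 * ⟪b α, b β⟫ := by
    intro α β
    have inner_eq : ∀ c : EuclideanSpace ℝ (Fin d),
        ∫ y, ‖c - u β y‖ ^ 2 ∂(μ β) = M β * ‖c‖ ^ 2 - 2 * ⟪c, b β⟫ + a β := by
      intro c
      have h1 : Integrable (fun y => ⟪c, u β y⟫) (μ β) := (hint β).const_inner c
      have h2 : Integrable (fun y => ‖c‖ ^ 2 - 2 * ⟪c, u β y⟫) (μ β) :=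
        (integrable_const _).sub (h1.const_mul 2)
      calc ∫ y, ‖c - u β y‖ ^ 2 ∂(μ β)
          = ∫ y, (‖c‖ ^ 2 - 2 * ⟪c, u β y⟫ + ‖u β y‖ ^ 2) ∂(μ β) := by
            congr 1; funext y; rw [norm_sub_sq_real]
        _ = (∫ y, (‖c‖ ^ 2 - 2 * ⟪c, u β y⟫) ∂(μ β)) + ∫ y, ‖u β y‖ ^ 2 ∂(μ β) :=
            integral_add h2 (hu_int β)
        _ = ((∫ _, (‖c‖ ^ 2 : ℝ) ∂(μ β)) - ∫ y, 2 * ⟪c, u β y⟫ ∂(μ β)) + a β := by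
            rw [integral_sub (integrable_const _) (h1.const_mul 2)]
        _ = M β * ‖c‖ ^ 2 - 2 * ⟪c, b β⟫ + a β := by
            rw [integral_const, integral_const_mul, integral_inner (hint β), Measure.real, hμ β,
              smul_eq_mul]
    have h1 : Integrable (fun x => M β * ‖u α x‖ ^ 2) (μ α) := (hu_int α).const_mul _
    have h3 : Integrable (fun x => ⟪b β, u α x⟫) (μ α) := (hint α).const_inner _
    have h4 : Integrable (fun x => M β * ‖u α x‖ ^ 2 - 2 * ⟪b β, u α x⟫) (μ α) :=
      h1.sub (h3.const_mul 2)
    calc (∫ x, ∫ y, ‖u α x - u β y‖ ^ 2 ∂(μ β) ∂(μ α))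
        = ∫ x, (M β * ‖u α x‖ ^ 2 - 2 * ⟪b β, u α x⟫ + a β) ∂(μ α) := by
          congr 1; funext x; rw [inner_eq (u α x), real_inner_comm]
      _ = ((∫ x, M β * ‖u α x‖ ^ 2 ∂(μ α)) - ∫ x, 2 * ⟪b β, u α x⟫ ∂(μ α))
            + ∫ _, (a β : ℝ) ∂(μ α) := by
          rw [integral_add h4 (integrable_const _),
            integral_sub h1 (h3.const_mul 2)]
      _ = M β * a α + M α * a β - 2 * ⟪b α, b β⟫ := by
          rw [integral_const_mul, integral_const_mul, integral_inner (hint α),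
            integral_const, Measure.real, hμ α, smul_eq_mul, real_inner_comm]
          ring
  set s : I → ℝ := fun α => a α - ‖b α‖ ^ 2 / M α with hsdef
  set v : I → EuclideanSpace ℝ (Fin d) := fun α => (M α)⁻¹ • b α with hvdef
  set n : I → I → ℝ := fun α β => ‖v α - v β‖ ^ 2 with hndef
  have key2 : ∀ α β, (∫ x, ∫ y, ‖u α x - u β y‖ ^ 2 ∂(μ β) ∂(μ α))
      = M β * s α + M α * s β + M α * M β * n α β := by
    intro α β
    rw [key α β]
    have hnv : n α β = ‖b α‖ ^ 2 / (M α) ^ 2 - 2 * ⟪b α, b β⟫ / (M α * M β)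
        + ‖b β‖ ^ 2 / (M β) ^ 2 := by
      simp only [hndef, hvdef]
      rw [norm_sub_sq_real]
      simp only [norm_smul, Real.norm_eq_abs, real_inner_smul_left, real_inner_smul_right]
      rw [abs_of_pos (inv_pos.mpr (hM α)), abs_of_pos (inv_pos.mpr (hM β))]
      field_simp
    rw [hnv]
    simp only [hsdef]
    exact stmt5_alg (M α) (M β) ⟪b α, b β⟫ (‖b α‖ ^ 2) (‖b β‖ ^ 2) (a α) (a β)
      (hM0 α) (hM0 β)
  have hFnonneg : ∀ α β, 0 ≤ ∫ x, ∫ y, ‖u α x - u β y‖ ^ 2 ∂(μ β) ∂(μ α) := fun α β =>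
    integral_nonneg fun x => integral_nonneg fun y => by positivity
  have hs_nonneg : ∀ α, 0 ≤ s α := by
    intro α
    have h := hFnonneg α α
    rw [key2 α α] at h
    have hn0 : n α α = 0 := by simp [hndef]
    rw [hn0] at h
    nlinarith [hM α]
  have hn_nonneg : ∀ α β, 0 ≤ n α β := fun α β => by simp only [hndef]; positivity
  -- coordinates of squared norms
  have hnormsq : ∀ w : EuclideanSpace ℝ (Fin d), ‖w‖ ^ 2 = ∑ i, (w i) ^ 2 := by
    intro w
    rw [EuclideanSpace.norm_eq, Real.sq_sqrt (by positivity)]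
    simp [Real.norm_eq_abs, sq_abs]
  -- remove the ≠ filters (diagonal terms vanish)
  have defilter : ∀ (f : I → I → ℝ), (∀ γ, f γ γ = 0) →
      (∑ γ, ∑ δ ∈ univ.filter (fun δ => δ ≠ γ), f γ δ) = ∑ γ, ∑ δ, f γ δ := by
    intro f hf
    refine Finset.sum_congr rfl fun γ _ => ?_
    rw [Finset.filter_ne', Finset.sum_erase _ (hf γ)]
  -- spectral-gap consequence for the mean velocities, coordinatewise
  have hG1 : lam * ∑ α, ∑ β, M α * M β * n α β
      ≤ SM * ∑ α, ∑ β, k α β * (M α * M β * n α β) := by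
    have hcoord : ∀ i : Fin d,
        lam * ∑ α, ∑ β, (v α i - v β i) ^ 2 * M α * M β
          ≤ SM * ∑ α, ∑ β, k α β * (v α i - v β i) ^ 2 * M α * M β := by
      intro i
      have h := hgap fun α => v α i
      rwa [defilter _ (fun γ => by ring), defilter _ (fun γ => by ring)] at h
    have hsum := Finset.sum_le_sum fun i (_ : i ∈ (univ : Finset (Fin d))) => hcoord i
    rw [← Finset.mul_sum, ← Finset.mul_sum] at hsum
    have hni : ∀ α β, n α β = ∑ i, (v α i - v β i) ^ 2 := by
      intro α β
      simp only [hndef]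
      rw [hnormsq (v α - v β)]
      exact Finset.sum_congr rfl fun i _ => rfl
    have e1 : (∑ i : Fin d, ∑ α, ∑ β, (v α i - v β i) ^ 2 * M α * M β)
        = ∑ α, ∑ β, M α * M β * n α β := by
      rw [Finset.sum_comm]
      refine Finset.sum_congr rfl fun α _ => ?_
      rw [Finset.sum_comm]
      refine Finset.sum_congr rfl fun β _ => ?_
      rw [hni α β, Finset.mul_sum]
      exact Finset.sum_congr rfl fun i _ => by ring
    have e2 : (∑ i : Fin d, ∑ α, ∑ β, k α β * (v α i - v β i) ^ 2 * M α * M β)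
        = ∑ α, ∑ β, k α β * (M α * M β * n α β) := by
      rw [Finset.sum_comm]
      refine Finset.sum_congr rfl fun α _ => ?_
      rw [Finset.sum_comm]
      refine Finset.sum_congr rfl fun β _ => ?_
      rw [hni α β, Finset.mul_sum, Finset.mul_sum]
      exact Finset.sum_congr rfl fun i _ => by ring
    rw [e1, e2] at hsum
    exact hsum
  -- spectral-gap consequence for indicators
  have hG2 : ∀ α, ζ * lam ≤ ∑ β, k α β * M β := by
    intro α
    set y : I → ℝ := fun γ => if γ = α then (1 : ℝ) else 0 with hy
    have hy2 : ∀ γ, y γ ^ 2 = y γ := by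
      intro γ; by_cases hγ : γ = α <;> simp [hy, hγ]
    have hsum_yM : (∑ γ, y γ * M γ) = M α := by
      rw [Finset.sum_eq_single α (fun γ _ hγ => by simp [hy, hγ]) (by simp)]
      simp [hy]
    have h := hgap y
    rw [defilter _ (fun γ => by ring), defilter _ (fun γ => by ring)] at h
    have e1 : (∑ γ, ∑ δ, (y γ - y δ) ^ 2 * M γ * M δ)
        = 2 * (M α * SM) - 2 * (M α * M α) := by
      have pt : ∀ γ δ, (y γ - y δ) ^ 2 * M γ * M δ
          = (y γ * M γ) * M δ - (y γ * M γ) * (2 * (y δ * M δ)) + M γ * (y δ * M δ) := by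
        intro γ δ
        linear_combination M γ * M δ * hy2 γ + M γ * M δ * hy2 δ
      rw [Finset.sum_congr rfl fun γ _ => Finset.sum_congr rfl fun δ _ => pt γ δ]
      simp only [Finset.sum_add_distrib, Finset.sum_sub_distrib, ← Finset.mul_sum,
        ← Finset.sum_mul]
      rw [hsum_yM, hSMdef]
      ring
    have e2 : (∑ γ, ∑ δ, k γ δ * (y γ - y δ) ^ 2 * M γ * M δ)
        = 2 * (M α * ∑ δ, k α δ * M δ) - 2 * (k α α * (M α * M α)) := by
      have pt : ∀ γ δ, k γ δ * (y γ - y δ) ^ 2 * M γ * M δ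
          = (y γ * M γ) * (k γ δ * M δ) - (y γ * M γ) * (2 * (y δ * (k γ δ * M δ)))
            + M γ * (y δ * (k γ δ * M δ)) := by
        intro γ δ
        linear_combination k γ δ * M γ * M δ * hy2 γ + k γ δ * M γ * M δ * hy2 δ
      have hsum_ykM : ∀ γ, (∑ δ, y δ * (k γ δ * M δ)) = k γ α * M α := by
        intro γ
        rw [Finset.sum_eq_single α (fun δ _ hδ => by simp [hy, hδ]) (by simp)]
        simp [hy]
      rw [Finset.sum_congr rfl fun γ _ => Finset.sum_congr rfl fun δ _ => pt γ δ]
      simp only [Finset.sum_add_distrib, Finset.sum_sub_distrib, ← Finset.mul_sum]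
      simp only [hsum_ykM]
      have t1 : (∑ γ, (y γ * M γ) * (∑ δ, k γ δ * M δ)) = M α * ∑ δ, k α δ * M δ := by
        rw [Finset.sum_eq_single α (fun γ _ hγ => by simp [hy, hγ]) (by simp)]
        simp [hy]
      have t2 : (∑ γ, (y γ * M γ) * (2 * (k γ α * M α))) = 2 * (k α α * (M α * M α)) := by
        rw [Finset.sum_eq_single α (fun γ _ hγ => by simp [hy, hγ]) (by simp)]
        simp [hy]; ring
      have t3 : (∑ γ, M γ * (k γ α * M α)) = M α * ∑ δ, k α δ * M δ := by
        rw [Finset.mul_sum]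
        refine Finset.sum_congr rfl fun γ _ => ?_
        rw [hk_symm α γ]; ring
      rw [t1, t2, t3]
      ring
    rw [e1, e2] at h
    have h1 : lam * (SM - M α) ≤ SM * (∑ δ, k α δ * M δ) := by
      have hkαα : 0 ≤ k α α * (M α * M α) :=
        mul_nonneg (hk_nonneg α α) (mul_nonneg (hM α).le (hM α).le)
      nlinarith [hM α, hSMpos]
    have hζα : ζ ≤ 1 - M α / SM := by
      rw [hζ]
      have hle : M α ≤ univ.sup' univ_nonempty M := Finset.le_sup' M (Finset.mem_univ α)
      have := (div_le_div_iff_of_pos_right hSMpos).mpr hle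
      linarith
    calc ζ * lam ≤ (1 - M α / SM) * lam := mul_le_mul_of_nonneg_right hζα hlam
      _ = lam * (SM - M α) / SM := by field_simp
      _ ≤ ∑ δ, k α δ * M δ := by
          rw [div_le_iff₀ hSMpos]
          linarith [h1]
  -- assemble
  set S1 : ℝ := ∑ α, s α with hS1def
  set B : ℝ := ∑ α, ∑ β, M α * M β * n α β with hBdef
  set KB : ℝ := ∑ α, ∑ β, k α β * (M α * M β * n α β) with hKBdef
  set KS : ℝ := ∑ α, (∑ β, k α β * M β) * s α with hKSdef
  have goal_lhs : (∑ α, ∑ β, ∫ x, ∫ y, ‖u α x - u β y‖ ^ 2 ∂(μ β) ∂(μ α))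
      = 2 * (SM * S1) + B := by
    rw [Finset.sum_congr rfl fun α _ => Finset.sum_congr rfl fun β _ => key2 α β]
    have step : ∀ α, (∑ β, (M β * s α + M α * s β + M α * M β * n α β))
        = (∑ β, M β) * s α + M α * (∑ β, s β) + ∑ β, M α * M β * n α β := by
      intro α
      rw [Finset.sum_add_distrib, Finset.sum_add_distrib, ← Finset.sum_mul,
        ← Finset.mul_sum]
    rw [Finset.sum_congr rfl fun α _ => step α]
    rw [Finset.sum_add_distrib, Finset.sum_add_distrib, ← Finset.mul_sum,
      ← Finset.sum_mul]
    rw [hSMdef, hS1def, hBdef]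
    ring
  have goal_rhs : (∑ α, ∑ β, k α β * ∫ x, ∫ y, ‖u α x - u β y‖ ^ 2 ∂(μ β) ∂(μ α))
      = 2 * KS + KB := by
    rw [Finset.sum_congr rfl fun α _ => Finset.sum_congr rfl fun β _ => by rw [key2 α β]]
    have step : ∀ α, (∑ β, k α β * (M β * s α + M α * s β + M α * M β * n α β))
        = (∑ β, k α β * M β) * s α + M α * (∑ β, k α β * s β)
          + ∑ β, k α β * (M α * M β * n α β) := by
      intro α
      rw [Finset.sum_mul, Finset.mul_sum, ← Finset.sum_add_distrib,
        ← Finset.sum_add_distrib]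
      refine Finset.sum_congr rfl fun β _ => by ring
    rw [Finset.sum_congr rfl fun α _ => step α]
    rw [Finset.sum_add_distrib, Finset.sum_add_distrib]
    have swap : (∑ α, M α * ∑ β, k α β * s β) = ∑ α, (∑ β, k α β * M β) * s α := by
      simp only [Finset.mul_sum, Finset.sum_mul]
      rw [Finset.sum_comm]
      refine Finset.sum_congr rfl fun x _ => Finset.sum_congr rfl fun y _ => ?_
      rw [hk_symm x y]; ring
    rw [swap, ← hKSdef, ← hKBdef]
    ring
  rw [goal_lhs, goal_rhs]
  have hS1 : 0 ≤ S1 := Finset.sum_nonneg fun α _ => hs_nonneg α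
  have hB : 0 ≤ B := Finset.sum_nonneg fun α _ => Finset.sum_nonneg fun β _ =>
    mul_nonneg (mul_nonneg (hM α).le (hM β).le) (hn_nonneg α β)
  have hζ1 : ζ ≤ 1 := by
    rw [hζ]
    obtain ⟨α0⟩ := ‹Nonempty I›
    have h1 : 0 < univ.sup' univ_nonempty M :=
      lt_of_lt_of_le (hM α0) (Finset.le_sup' M (Finset.mem_univ α0))
    have : 0 ≤ univ.sup' univ_nonempty M / SM := div_nonneg h1.le hSMpos.le
    linarith
  have t1 : ζ * lam * S1 ≤ KS := by
    rw [hKSdef, hS1def, Finset.mul_sum]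
    exact Finset.sum_le_sum fun α _ =>
      mul_le_mul_of_nonneg_right (hG2 α) (hs_nonneg α)
  have t2 : ζ * lam * B / SM ≤ KB := by
    rw [div_le_iff₀ hSMpos]
    calc ζ * lam * B ≤ 1 * lam * B := by
          have h5 : ζ * lam ≤ 1 * lam := mul_le_mul_of_nonneg_right hζ1 hlam
          exact mul_le_mul_of_nonneg_right h5 hB
      _ = lam * B := by ring
      _ ≤ SM * KB := hG1
      _ = KB * SM := mul_comm _ _
  have expand : ζ * lam / SM * (2 * (SM * S1) + B)
      = 2 * (ζ * lam * S1) + ζ * lam * B / SM := by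
    field_simp
  rw [expand]
  linarith
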